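/- For the PSD square root R of ÛᵀÛ where Û = U*Σ*W + E as above, the smallest singular value satisfies σ_min(R) ≥ σ_min(Σ*)·σ_min(W) − ‖Σ*‖₂·‖E(Σ*)⁻¹‖₂. -/

import Mathlib

open Matrix

/-- Spectral (operator) norm of a real matrix. -/
noncomputable def sNorm {n r : ℕ} (A : Matrix (Fin n) (Fin r) ℝ) : ℝ :=
  ‖(LinearMap.toContinuousLinearMap (Matrix.toEuclideanLin A))‖

/-- Smallest singular value of a real matrix. -/
noncomputable def sMin {n r : ℕ} (A : Matrix (Fin n) (Fin r) ℝ) : ℝ :=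
  ⨅ x : Metric.sphere (0 : EuclideanSpace ℝ (Fin r)) 1, ‖Matrix.toEuclideanLin A x‖

lemma norm_toEuclideanLin_sq {n r : ℕ} (A : Matrix (Fin n) (Fin r) ℝ)
    (x : EuclideanSpace ℝ (Fin r)) :
    ‖Matrix.toEuclideanLin A x‖^2 =
      (WithLp.equiv 2 _ x) ⬝ᵥ ((Aᵀ*A) *ᵥ (WithLp.equiv 2 _ x)) := by
  rw [← real_inner_self_eq_norm_sq]
  rw [← mulVec_mulVec, dotProduct_mulVec, vecMul_transpose]
  simp [PiLp.inner_apply, toEuclideanLin_apply, dotProduct]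
  rw [EuclideanSpace.norm_eq, Real.sq_sqrt (by positivity)]
  simp [sq]

lemma sMin_nonneg {n r : ℕ} (A : Matrix (Fin n) (Fin r) ℝ) : 0 ≤ sMin A :=
  Real.iInf_nonneg fun _ => norm_nonneg _

lemma sNorm_nonneg {n r : ℕ} (A : Matrix (Fin n) (Fin r) ℝ) : 0 ≤ sNorm A :=
  norm_nonneg _

lemma sMin_le {n r : ℕ} (A : Matrix (Fin n) (Fin r) ℝ)
    (x : EuclideanSpace ℝ (Fin r)) (hx : ‖x‖ = 1) :
    sMin A ≤ ‖Matrix.toEuclideanLin A x‖ := by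
  have hmem : x ∈ Metric.sphere (0 : EuclideanSpace ℝ (Fin r)) 1 := by
    simpa [mem_sphere_zero_iff_norm] using hx
  exact ciInf_le ⟨0, fun y ⟨i, hi⟩ => hi ▸ norm_nonneg _⟩ (⟨x, hmem⟩ : Metric.sphere _ 1)

lemma sMin_mul_norm_le {n r : ℕ} (A : Matrix (Fin n) (Fin r) ℝ)
    (x : EuclideanSpace ℝ (Fin r)) :
    sMin A * ‖x‖ ≤ ‖Matrix.toEuclideanLin A x‖ := by
  rcases eq_or_ne x 0 with h | h
  · simp [h]
  · have hx : ‖x‖ ≠ 0 := norm_ne_zero_iff.mpr h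
    have hu : ‖(‖x‖⁻¹ • x : EuclideanSpace ℝ (Fin r))‖ = 1 := by
      rw [norm_smul, norm_inv, norm_norm, inv_mul_cancel₀ hx]
    have := sMin_le A _ hu
    rw [_root_.map_smul, norm_smul, norm_inv, norm_norm] at this
    have hxpos : (0:ℝ) < ‖x‖ := lt_of_le_of_ne (norm_nonneg x) (Ne.symm hx)
    calc sMin A * ‖x‖ ≤ (‖x‖⁻¹ * ‖Matrix.toEuclideanLin A x‖) * ‖x‖ := by
          exact mul_le_mul_of_nonneg_right this (norm_nonneg x)
      _ = ‖Matrix.toEuclideanLin A x‖ := by field_simp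

lemma norm_le_sNorm_mul {n r : ℕ} (A : Matrix (Fin n) (Fin r) ℝ)
    (x : EuclideanSpace ℝ (Fin r)) :
    ‖Matrix.toEuclideanLin A x‖ ≤ sNorm A * ‖x‖ := by
  have := (LinearMap.toContinuousLinearMap (Matrix.toEuclideanLin A)).le_opNorm x
  simpa [sNorm] using this

lemma toEuclideanLin_mul_apply {n r m : ℕ} (A : Matrix (Fin n) (Fin m) ℝ)
    (B : Matrix (Fin m) (Fin r) ℝ) (x : EuclideanSpace ℝ (Fin r)) :
    Matrix.toEuclideanLin (A * B) x =
      Matrix.toEuclideanLin A (Matrix.toEuclideanLin B x) := by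
  simp [toEuclideanLin_apply, mulVec_mulVec]

theorem stmt2 {n r : ℕ}
    (Ustar : Matrix (Fin n) (Fin r) ℝ) (S W : Matrix (Fin r) (Fin r) ℝ)
    (E : Matrix (Fin n) (Fin r) ℝ)
    (hUstar : Ustarᵀ * Ustar = 1)
    (hdiag : S.IsDiag) (hSinv : IsUnit S.det)
    (Uhat : Matrix (Fin n) (Fin r) ℝ) (hUhat : Uhat = Ustar * S * W + E)
    (R : Matrix (Fin r) (Fin r) ℝ)
    (hRpsd : R.PosSemidef) (hR2 : R * R = Uhatᵀ * Uhat) :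
    sMin S * sMin W - sNorm S * sNorm (E * S⁻¹) ≤ sMin R := by
  -- Rᵀ = R
  have hRT : Rᵀ = R := by
    have h := hRpsd.isHermitian
    have : Rᴴ = Rᵀ := by
      ext i j; simp [conjTranspose_apply]
    rw [← this]; exact h
  -- key pointwise identity : ‖R x‖ = ‖Uhat x‖
  have hRU : ∀ x : EuclideanSpace ℝ (Fin r),
      ‖Matrix.toEuclideanLin R x‖ = ‖Matrix.toEuclideanLin Uhat x‖ := by
    intro x
    have h1 := norm_toEuclideanLin_sq R x
    have h2 := norm_toEuclideanLin_sq Uhat x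
    rw [hRT, hR2] at h1
    have hsq : ‖Matrix.toEuclideanLin R x‖^2 = ‖Matrix.toEuclideanLin Uhat x‖^2 := by
      rw [h1, h2]
    nlinarith [norm_nonneg (Matrix.toEuclideanLin R x),
      norm_nonneg (Matrix.toEuclideanLin Uhat x)]
  -- ‖Ustar y‖ = ‖y‖
  have hUiso : ∀ y : EuclideanSpace ℝ (Fin r),
      ‖Matrix.toEuclideanLin Ustar y‖ = ‖y‖ := by
    intro y
    have h1 := norm_toEuclideanLin_sq Ustar y
    rw [hUstar] at h1
    have h2 : (WithLp.equiv 2 _ y) ⬝ᵥ ((1 : Matrix (Fin r) (Fin r) ℝ) *ᵥ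
        (WithLp.equiv 2 _ y)) = ‖y‖^2 := by
      rw [one_mulVec, ← real_inner_self_eq_norm_sq]
      simp [PiLp.inner_apply, dotProduct]
      rw [EuclideanSpace.norm_eq, Real.sq_sqrt (by positivity)]
      simp [sq]
    rw [h2] at h1
    nlinarith [norm_nonneg (Matrix.toEuclideanLin Ustar y), norm_nonneg y]
  by_cases hne : Nonempty (Metric.sphere (0 : EuclideanSpace ℝ (Fin r)) 1)
  · -- pointwise bound on the sphere
    apply le_ciInf
    rintro ⟨x, hx⟩
    have hxn : ‖x‖ = 1 := by simpa [mem_sphere_zero_iff_norm] using hx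
    rw [hRU x, hUhat]
    have hsplit : Matrix.toEuclideanLin (Ustar * S * W + E) x =
        Matrix.toEuclideanLin (Ustar * S * W) x + Matrix.toEuclideanLin E x := by
      rw [map_add]; rfl
    set a := Matrix.toEuclideanLin (Ustar * S * W) x
    set b := Matrix.toEuclideanLin E x
    -- ‖a‖ - ‖b‖ ≤ ‖a + b‖
    have htri : ‖a‖ - ‖b‖ ≤ ‖a + b‖ := by
      have := norm_add_le (a + b) (-b)
      simp only [add_neg_cancel_right, norm_neg] at this
      linarith
    -- ‖a‖ = ‖S W x‖ ≥ sMin S * sMin W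
    have ha : sMin S * sMin W ≤ ‖a‖ := by
      have h1 : a = Matrix.toEuclideanLin Ustar
          (Matrix.toEuclideanLin S (Matrix.toEuclideanLin W x)) := by
        show Matrix.toEuclideanLin (Ustar * S * W) x = _
        rw [toEuclideanLin_mul_apply (Ustar * S) W, toEuclideanLin_mul_apply]
      rw [h1, hUiso]
      have h2 : sMin S * ‖Matrix.toEuclideanLin W x‖ ≤
          ‖Matrix.toEuclideanLin S (Matrix.toEuclideanLin W x)‖ :=
        sMin_mul_norm_le S _
      have h3 : sMin W ≤ ‖Matrix.toEuclideanLin W x‖ := sMin_le W x hxn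
      have := mul_le_mul_of_nonneg_left h3 (sMin_nonneg S)
      linarith
    -- ‖b‖ = ‖E x‖ ≤ sNorm S * sNorm (E S⁻¹)
    have hb : ‖b‖ ≤ sNorm S * sNorm (E * S⁻¹) := by
      have hE : E = (E * S⁻¹) * S := by
        rw [Matrix.mul_assoc, Matrix.nonsing_inv_mul S hSinv, Matrix.mul_one]
      have h1 : b = Matrix.toEuclideanLin (E * S⁻¹)
          (Matrix.toEuclideanLin S x) := by
        show Matrix.toEuclideanLin E x = _
        rw [← toEuclideanLin_mul_apply, ← hE]
      rw [h1]
      calc ‖Matrix.toEuclideanLin (E * S⁻¹) (Matrix.toEuclideanLin S x)‖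
          ≤ sNorm (E * S⁻¹) * ‖Matrix.toEuclideanLin S x‖ := norm_le_sNorm_mul _ _
        _ ≤ sNorm (E * S⁻¹) * (sNorm S * ‖x‖) := by
            exact mul_le_mul_of_nonneg_left (norm_le_sNorm_mul S x) (sNorm_nonneg _)
        _ = sNorm S * sNorm (E * S⁻¹) := by rw [hxn]; ring
    rw [hsplit]
    linarith
  · -- empty sphere: both infima are 0
    have he : IsEmpty (Metric.sphere (0 : EuclideanSpace ℝ (Fin r)) 1) :=
      not_nonempty_iff.mp hne
    have hR0 : sMin R = 0 := by
      rw [sMin, iInf_of_isEmpty]; exact Real.sInf_empty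
    have hS0 : sMin S = 0 := by
      rw [sMin, iInf_of_isEmpty]; exact Real.sInf_empty
    rw [hR0, hS0]
    have := mul_nonneg (sNorm_nonneg S) (sNorm_nonneg (E * S⁻¹))
    linarith
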